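/- The set { (p+q+r)^2/(pqr) : p, q, r positive integers } is dense in the positive real numbers. -/

import Mathlib

/-- The set `{ (p+q+r)^2/(pqr) : p, q, r positive integers }` is dense in the
positive real numbers. -/
theorem dense_volumes :
    ∀ x ∈ Set.Ioi (0:ℝ), x ∈ closure
      { v : ℝ | ∃ p q r : ℕ, 0 < p ∧ 0 < q ∧ 0 < r ∧
        v = ((p : ℝ) + q + r) ^ 2 / ((p : ℝ) * q * r) } := by
  intro x hx
  rw [Set.mem_Ioi] at hx
  rw [Metric.mem_closure_iff]
  intro ε hε
  obtain ⟨n, hn⟩ := exists_nat_gt (max (9 / ε) (1 / x))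
  have hn9 : 9 / ε < (n : ℝ) := lt_of_le_of_lt (le_max_left _ _) hn
  have hn1 : 1 / x < (n : ℝ) := lt_of_le_of_lt (le_max_right _ _) hn
  have hnpos : (0 : ℝ) < n := lt_trans (by positivity) hn9
  have hnpos' : 0 < n := by exact_mod_cast hnpos
  have hn1' : (1 : ℝ) ≤ n := by exact_mod_cast hnpos'
  set r : ℕ := ⌈x * (n : ℝ) ^ 2⌉₊ with hrdef
  have hrge : x * (n : ℝ) ^ 2 ≤ r := Nat.le_ceil _
  have hrlt : (r : ℝ) < x * (n : ℝ) ^ 2 + 1 :=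
    Nat.ceil_lt_add_one (by positivity)
  have hxn : (1 : ℝ) < x * n := by
    rw [div_lt_iff₀ hx] at hn1
    linarith [mul_comm x (n : ℝ)]
  have hrn : (n : ℝ) ≤ r := by
    have : (n : ℝ) ≤ x * (n : ℝ) ^ 2 := by
      have := mul_le_mul_of_nonneg_right hxn.le hnpos.le
      calc (n : ℝ) = 1 * n := by ring
        _ ≤ x * n * n := this
        _ = x * (n : ℝ) ^ 2 := by ring
    linarith
  have hrpos : (0 : ℝ) < r := lt_of_lt_of_le hnpos hrn
  have hrpos' : 0 < r := by exact_mod_cast hrpos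
  refine ⟨((n : ℝ) + n + r) ^ 2 / ((n : ℝ) * n * r),
    ⟨n, n, r, hnpos', hnpos', hrpos', rfl⟩, ?_⟩
  have hv : ((n : ℝ) + n + r) ^ 2 / ((n : ℝ) * n * r)
      = 4 / r + 4 / n + (r : ℝ) / (n : ℝ) ^ 2 := by
    field_simp
    ring
  rw [hv, Real.dist_eq]
  have h1 : (4 : ℝ) / r ≤ 4 / n := by
    apply div_le_div_of_nonneg_left (by norm_num) hnpos hrn
  have h2 : (r : ℝ) / (n : ℝ) ^ 2 - x < 1 / (n : ℝ) ^ 2 := by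
    rw [div_sub' (by positivity), div_lt_div_iff₀ (by positivity) (by positivity)]
    nlinarith
  have h3 : (0 : ℝ) ≤ (r : ℝ) / (n : ℝ) ^ 2 - x := by
    rw [sub_nonneg, le_div_iff₀ (by positivity)]
    linarith
  have h4 : (1 : ℝ) / (n : ℝ) ^ 2 ≤ 1 / n := by
    apply div_le_div_of_nonneg_left (by norm_num) hnpos
    nlinarith
  have h5 : (9 : ℝ) / n < ε := by
    rw [div_lt_iff₀ hnpos]
    rw [div_lt_iff₀ hε] at hn9
    linarith [mul_comm ε (n : ℝ)]
  have h6 : (4 : ℝ) / n + 4 / n + 1 / n = 9 / n := by ring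
  rw [abs_sub_comm, abs_of_nonneg (by linarith [div_nonneg (by norm_num : (0:ℝ) ≤ 4) hrpos.le])]
  linarith
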